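/- If f : [a,b] → ℝ is differentiable with f' absolutely continuous on [a,b], a < b, and M is a real number such that f''(t) ≤ M for almost every t ∈ [a,b], then |∫_a^b f(t) dt − (b−a)/90 · (7f(a) + 32f((3a+b)/4) + 12f((a+b)/2) + 32f((a+3b)/4) + 7f(b))| ≤ (17/1440) · (M − (f'(b)−f'(a))/(b−a)) · (b−a)³. -/

import Mathlib

open MeasureTheory intervalIntegral Set

lemma fubini_aux (a b : ℝ) (hab : a ≤ b) (g : ℝ → ℝ)
    (hg : IntegrableOn g (Set.Ioc a b))
    (k : ℝ → ℝ → ℝ) (hk : Continuous fun z : ℝ × ℝ => k z.1 z.2)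
    (C : ℝ) (hC : ∀ x ∈ Set.Ioc a b, ∀ t ∈ Set.Ioc a b, |k x t| ≤ C) :
    ∫ x in a..b, (∫ t in a..x, k x t * g t) = ∫ t in a..b, (∫ x in t..b, k x t) * g t := by
  set μ : Measure ℝ := volume.restrict (Set.Ioc a b) with hμ
  set F : ℝ × ℝ → ℝ := Set.indicator {z : ℝ × ℝ | z.2 ≤ z.1} (fun z => k z.1 z.2 * g z.2) with hF
  have hS : MeasurableSet {z : ℝ × ℝ | z.2 ≤ z.1} := measurableSet_le measurable_snd measurable_fst
  have hgm : AEStronglyMeasurable (fun z : ℝ × ℝ => g z.2) (μ.prod μ) :=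
    hg.aestronglyMeasurable.comp_snd
  have hFm : AEStronglyMeasurable F (μ.prod μ) :=
    (hk.aestronglyMeasurable.mul hgm).indicator hS
  have hbd : Integrable (fun z : ℝ × ℝ => C * ‖g z.2‖) (μ.prod μ) := by
    simpa using (integrable_const C).mul_prod hg.norm
  have hmem : ∀ᵐ z : ℝ × ℝ ∂μ.prod μ, z ∈ (Set.Ioc a b) ×ˢ (Set.Ioc a b) := by
    rw [hμ, Measure.prod_restrict]
    exact ae_restrict_mem (measurableSet_Ioc.prod measurableSet_Ioc)
  have hFint : Integrable F (μ.prod μ) := by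
    refine hbd.mono' hFm ?_
    filter_upwards [hmem] with z hz
    calc ‖F z‖ ≤ ‖k z.1 z.2 * g z.2‖ := norm_indicator_le_norm_self _ _
      _ = |k z.1 z.2| * ‖g z.2‖ := by rw [norm_mul]; rfl
      _ ≤ C * ‖g z.2‖ :=
        mul_le_mul_of_nonneg_right (hC _ hz.1 _ hz.2) (norm_nonneg _)
  have key : ∫ x, (∫ t, F (x, t) ∂μ) ∂μ = ∫ t, (∫ x, F (x, t) ∂μ) ∂μ := by
    have : Function.uncurry (fun x t => F (x, t)) = F := by ext ⟨x, t⟩; rfl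
    exact integral_integral_swap (this ▸ hFint)
  have hL : ∫ x in a..b, (∫ t in a..x, k x t * g t) = ∫ x, (∫ t, F (x, t) ∂μ) ∂μ := by
    rw [integral_of_le hab]
    refine setIntegral_congr_fun measurableSet_Ioc (fun x hx => ?_)
    have h1 : (fun t => F (x, t)) = Set.indicator (Set.Iic x) (fun t => k x t * g t) := by
      ext t
      by_cases h : t ≤ x <;> simp [hF, Set.indicator_apply, h]
    rw [integral_of_le hx.1.le, h1, setIntegral_indicator measurableSet_Iic,
      Set.Ioc_inter_Iic, min_eq_right hx.2]
  have hR : ∫ t in a..b, (∫ x in t..b, k x t) * g t = ∫ t, (∫ x, F (x, t) ∂μ) ∂μ := by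
    rw [integral_of_le hab]
    refine setIntegral_congr_fun measurableSet_Ioc (fun t ht => ?_)
    have h1 : (fun x => F (x, t)) = Set.indicator (Set.Ici t) (fun x => k x t * g t) := by
      ext x
      by_cases h : t ≤ x <;> simp [hF, Set.indicator_apply, h]
    have h2 : Set.Ioc a b ∩ Set.Ici t = Set.Icc t b := by
      ext x
      constructor
      · rintro ⟨⟨_, h2⟩, h3⟩; exact ⟨h3, h2⟩
      · rintro ⟨h1', h2⟩; exact ⟨⟨lt_of_lt_of_le ht.1 h1', h2⟩, h1'⟩
    rw [h1, setIntegral_indicator measurableSet_Ici, h2,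
      integral_Icc_eq_integral_Ioc, ← integral_of_le ht.2, intervalIntegral.integral_mul_const]
  rw [hL, hR, key]

lemma swap_one (a x : ℝ) (hax : a ≤ x) (g : ℝ → ℝ)
    (hg : IntegrableOn g (Set.Ioc a x)) :
    ∫ u in a..x, (∫ t in a..u, g t) = ∫ t in a..x, (x - t) * g t := by
  have h := fubini_aux a x hax g hg (fun _ _ => 1) (by continuity) 1
    (fun _ _ _ _ => by norm_num)
  simp only [one_mul] at h
  rw [h]
  refine integral_congr (fun t ht => ?_)
  simp [smul_eq_mul]

lemma swap_two (a b : ℝ) (hab : a ≤ b) (g : ℝ → ℝ)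
    (hg : IntegrableOn g (Set.Ioc a b)) :
    ∫ x in a..b, (∫ t in a..x, (x - t) * g t) = ∫ t in a..b, ((b - t) ^ 2 / 2) * g t := by
  have h := fubini_aux a b hab g hg (fun x t => x - t)
    (by continuity) (b - a)
    (fun x hx t ht => abs_le.2 ⟨by simp at hx ht ⊢; linarith [hx.1, ht.2], by
      simp at hx ht ⊢; linarith [hx.2, ht.1]⟩)
  rw [h]
  refine integral_congr (fun t ht => ?_)
  have : ∫ x in t..b, (x - t) = (b - t) ^ 2 / 2 := by
    rw [integral_sub intervalIntegrable_id intervalIntegrable_const, integral_id,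
      intervalIntegral.integral_const, smul_eq_mul]
    ring
  rw [this]

lemma taylor_rep (a b : ℝ) (hab : a < b) (f f' f'' : ℝ → ℝ)
    (hderiv : ∀ x ∈ Set.Icc a b, HasDerivAt f (f' x) x)
    (hint : MeasureTheory.IntegrableOn f'' (Set.Icc a b))
    (hac : ∀ x ∈ Set.Icc a b, f' x - f' a = ∫ t in a..x, f'' t) :
    ∀ x ∈ Set.Icc a b, f x = f a + f' a * (x - a) + ∫ t in a..x, (x - t) * f'' t := by
  intro x hx
  have hax : a ≤ x := hx.1
  have hsub : Set.Icc a x ⊆ Set.Icc a b := Set.Icc_subset_Icc le_rfl hx.2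
  have hintax : IntegrableOn f'' (Set.Icc a x) := hint.mono_set hsub
  have huIcc : Set.uIcc a x = Set.Icc a x := Set.uIcc_of_le hax
  have hPcont : ContinuousOn (fun u => ∫ t in a..u, f'' t) (Set.Icc a x) := by
    have := continuousOn_primitive_interval (a := a) (b := x) (μ := volume) (f := f'')
      (by rwa [huIcc])
    rwa [huIcc] at this
  have hf'cont : ContinuousOn f' (Set.Icc a x) := by
    refine ContinuousOn.congr ((continuousOn_const (c := f' a)).add hPcont) fun u hu => ?_
    have h := hac u (hsub hu)
    simp only [Pi.add_apply]
    linarith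
  have hfi : IntervalIntegrable f' volume a x :=
    (huIcc ▸ hf'cont).intervalIntegrable
  have h1 : ∫ u in a..x, f' u = f x - f a :=
    integral_eq_sub_of_hasDerivAt
      (fun t ht => hderiv t (hsub (huIcc ▸ ht))) hfi
  have hPint : IntervalIntegrable (fun u => ∫ t in a..u, f'' t) volume a x :=
    (huIcc ▸ hPcont).intervalIntegrable
  have h2 : ∫ u in a..x, f' u
      = ∫ u in a..x, (f' a + ∫ t in a..u, f'' t) := by
    refine integral_congr fun u hu => ?_
    have h := hac u (hsub (huIcc ▸ hu))
    linarith
  have h3 : ∫ u in a..x, (f' a + ∫ t in a..u, f'' t)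
      = f' a * (x - a) + ∫ u in a..x, (∫ t in a..u, f'' t) := by
    rw [integral_add intervalIntegrable_const hPint, intervalIntegral.integral_const,
      smul_eq_mul, mul_comm]
  have h4 : ∫ u in a..x, (∫ t in a..u, f'' t) = ∫ t in a..x, (x - t) * f'' t :=
    swap_one a x hax f'' (hint.mono_set (Set.Ioc_subset_Icc_self.trans hsub))
  rw [h2, h3, h4] at h1
  linarith

noncomputable def booleK (a b t : ℝ) : ℝ :=
  (b - t)^2/2 - (b - a)/90 * (32 * max ((3*a+b)/4 - t) 0 + 12 * max ((a+b)/2 - t) 0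
    + 32 * max ((a+3*b)/4 - t) 0 + 7 * max (b - t) 0)

lemma booleK_cont (a b : ℝ) : Continuous (booleK a b) := by
  unfold booleK; fun_prop

lemma booleK_bound (a b : ℝ) (hab : a < b) :
    ∀ t ∈ Set.Icc a b, |booleK a b t| ≤ 17/1440 * (b - a)^2 := by
  intro t ht
  obtain ⟨h1, h2⟩ := ht
  unfold booleK
  rcases le_or_gt t ((3*a+b)/4) with hr1 | hr1
  · rw [max_eq_left (by linarith), max_eq_left (by linarith), max_eq_left (by linarith),
      max_eq_left (by linarith), abs_le]
    constructor
    · nlinarith [sq_nonneg (t - a - 7/90*(b-a)), sq_nonneg (b - a)]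
    · nlinarith [mul_nonneg (by linarith : (0:ℝ) ≤ (3*a+b)/4 - t)
        (by linarith : (0:ℝ) ≤ t - a + 17/180*(b-a))]
  · rcases le_or_gt t ((a+b)/2) with hr2 | hr2
    · rw [max_eq_right (by linarith), max_eq_left (by linarith), max_eq_left (by linarith),
        max_eq_left (by linarith), abs_le]
      constructor
      · nlinarith [sq_nonneg (t - a - 13/30*(b-a)), sq_nonneg (b - a)]
      · nlinarith [mul_nonneg (by linarith : (0:ℝ) ≤ t - a - 1/4*(b-a))
          (by linarith : (0:ℝ) ≤ 37/60*(b-a) - (t - a))]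
    · rcases le_or_gt t ((a+3*b)/4) with hr3 | hr3
      · rw [max_eq_right (by linarith), max_eq_right (by linarith), max_eq_left (by linarith),
          max_eq_left (by linarith), abs_le]
        constructor
        · nlinarith [sq_nonneg (t - a - 17/30*(b-a)), sq_nonneg (b - a)]
        · nlinarith [mul_nonneg (by linarith : (0:ℝ) ≤ t - a - 23/60*(b-a))
            (by linarith : (0:ℝ) ≤ 3/4*(b-a) - (t - a))]
      · rw [max_eq_right (by linarith), max_eq_right (by linarith), max_eq_right (by linarith),
          max_eq_left (by linarith), abs_le]
        constructor
        · nlinarith [sq_nonneg (b - t - 7/90*(b-a)), sq_nonneg (b - a)]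
        · nlinarith [mul_nonneg (by linarith : (0:ℝ) ≤ t - (a+3*b)/4)
            (by linarith : (0:ℝ) ≤ b - t + 17/180*(b-a))]

lemma max_integral (a c b : ℝ) (hac : a ≤ c) (hcb : c ≤ b) :
    ∫ t in a..b, max (c - t) 0 = (c - a)^2/2 := by
  have hmc : Continuous (fun t : ℝ => max (c - t) 0) := by fun_prop
  have hi1 : IntervalIntegrable (fun t => max (c - t) 0) volume a c :=
    hmc.intervalIntegrable a c
  have hi2 : IntervalIntegrable (fun t => max (c - t) 0) volume c b :=
    hmc.intervalIntegrable c b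
  rw [← integral_add_adjacent_intervals hi1 hi2]
  have e1 : ∫ t in a..c, max (c - t) 0 = ∫ t in a..c, (c - t) := by
    refine integral_congr fun t ht => ?_
    rw [Set.uIcc_of_le hac] at ht
    exact max_eq_left (by linarith [ht.2])
  have e2 : ∫ t in c..b, max (c - t) 0 = 0 := by
    have : Set.EqOn (fun t => max (c - t) 0) (fun _ => (0:ℝ)) (Set.uIcc c b) := by
      intro t ht
      rw [Set.uIcc_of_le hcb] at ht
      exact max_eq_right (by linarith [ht.1])
    rw [integral_congr this]
    simp
  rw [e1, e2, integral_sub intervalIntegrable_const intervalIntegrable_id,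
    intervalIntegral.integral_const, integral_id, smul_eq_mul]
  ring

lemma node_swap (a c b : ℝ) (hac : a ≤ c) (hcb : c ≤ b) (g : ℝ → ℝ)
    (hg : IntegrableOn g (Set.Icc a b)) :
    ∫ t in a..c, (c - t) * g t = ∫ t in a..b, max (c - t) 0 * g t := by
  have hKg : IntegrableOn (fun t => max (c - t) 0 * g t) (Set.Icc a b) :=
    IntegrableOn.continuousOn_mul (Continuous.continuousOn (by fun_prop)) hg isCompact_Icc
  have hi1 : IntervalIntegrable (fun t => max (c - t) 0 * g t) volume a c := by
    have h := hKg.mono_set (Set.Icc_subset_Icc le_rfl hcb)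
    rwa [intervalIntegrable_iff_integrableOn_Icc_of_le hac]
  have hi2 : IntervalIntegrable (fun t => max (c - t) 0 * g t) volume c b := by
    have h := hKg.mono_set (Set.Icc_subset_Icc hac le_rfl)
    rwa [intervalIntegrable_iff_integrableOn_Icc_of_le hcb]
  rw [← integral_add_adjacent_intervals hi1 hi2]
  have e1 : ∫ t in a..c, max (c - t) 0 * g t = ∫ t in a..c, (c - t) * g t := by
    refine integral_congr fun t ht => ?_
    rw [Set.uIcc_of_le hac] at ht
    rw [max_eq_left (by linarith [ht.2])]
  have e2 : ∫ t in c..b, max (c - t) 0 * g t = 0 := by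
    have : Set.EqOn (fun t => max (c - t) 0 * g t) (fun _ => (0:ℝ)) (Set.uIcc c b) := by
      intro t ht
      rw [Set.uIcc_of_le hcb] at ht
      simp only
      rw [max_eq_right (by linarith [ht.1]), zero_mul]
    rw [integral_congr this]
    simp
  rw [e1, e2, add_zero]

lemma booleK_integral (a b : ℝ) (hab : a ≤ b) :
    ∫ t in a..b, booleK a b t = 0 := by
  have h0 : ∫ t in a..b, (b - t)^2/2 = (b - a)^3/6 := by
    have := intervalIntegral.integral_comp_sub_left (a := a) (b := b) (fun x => x^2/2) b
    simp only [sub_self] at this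
    rw [show (fun t => (b - t)^2/2) = fun t => (fun x => x^2/2) (b - t) from rfl, this]
    rw [intervalIntegral.integral_div, integral_pow]
    ring
  have hmax : ∀ c : ℝ, Continuous (fun t => max (c - t) 0) := fun c => by fun_prop
  have ii : ∀ c : ℝ, IntervalIntegrable (fun t => max (c - t) 0) volume a b :=
    fun c => (hmax c).intervalIntegrable _ _
  unfold booleK
  have c1 : Continuous (fun t : ℝ => (b - t)^2/2) := by fun_prop
  have c2 : Continuous (fun t : ℝ => (b - a)/90 * (32 * max ((3*a+b)/4 - t) 0
      + 12 * max ((a+b)/2 - t) 0 + 32 * max ((a+3*b)/4 - t) 0 + 7 * max (b - t) 0)) := by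
    fun_prop
  rw [integral_sub (c1.intervalIntegrable a b) (c2.intervalIntegrable a b), h0]
  rw [intervalIntegral.integral_const_mul]
  rw [integral_add (((((ii _).const_mul 32).add ((ii _).const_mul 12)).add
      ((ii _).const_mul 32)) ) ((ii _).const_mul 7),
    integral_add ((((ii _).const_mul 32).add ((ii _).const_mul 12))) ((ii _).const_mul 32),
    integral_add (((ii _).const_mul 32)) ((ii _).const_mul 12),
    intervalIntegral.integral_const_mul, intervalIntegral.integral_const_mul, intervalIntegral.integral_const_mul, intervalIntegral.integral_const_mul,
    max_integral a ((3*a+b)/4) b (by linarith) (by linarith),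
    max_integral a ((a+b)/2) b (by linarith) (by linarith),
    max_integral a ((a+3*b)/4) b (by linarith) (by linarith),
    max_integral a b b (by linarith) (by linarith)]
  ring


theorem boole_bound_3 (a b M : ℝ) (hab : a < b) (f f' f'' : ℝ → ℝ)
    (hderiv : ∀ x ∈ Set.Icc a b, HasDerivAt f (f' x) x)
    (hint : MeasureTheory.IntegrableOn f'' (Set.Icc a b))
    (hac : ∀ x ∈ Set.Icc a b, f' x - f' a = ∫ t in a..x, f'' t)
    (hbound : ∀ᵐ t, t ∈ Set.Icc a b → f'' t ≤ M) :
    |(∫ t in a..b, f t) - (b - a)/90 * (7*f a + 32*f ((3*a+b)/4) + 12*f ((a+b)/2) + 32*f ((a+3*b)/4) + 7*f b)| ≤ (17/1440 * (M - (f' b - f' a)/(b - a))) * (b - a)^3 := by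
  have hab' : a ≤ b := hab.le
  have hm1 : (3*a+b)/4 ∈ Set.Icc a b := ⟨by linarith, by linarith⟩
  have hm2 : (a+b)/2 ∈ Set.Icc a b := ⟨by linarith, by linarith⟩
  have hm3 : (a+3*b)/4 ∈ Set.Icc a b := ⟨by linarith, by linarith⟩
  have hmb : b ∈ Set.Icc a b := ⟨hab', le_rfl⟩
  have hT := taylor_rep a b hab f f' f'' hderiv hint hac
  have hn1 : f ((3*a+b)/4) = f a + f' a * ((3*a+b)/4 - a)
      + ∫ t in a..b, max ((3*a+b)/4 - t) 0 * f'' t := by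
    rw [hT _ hm1, node_swap a _ b (by linarith) (by linarith) f'' hint]
  have hn2 : f ((a+b)/2) = f a + f' a * ((a+b)/2 - a)
      + ∫ t in a..b, max ((a+b)/2 - t) 0 * f'' t := by
    rw [hT _ hm2, node_swap a _ b (by linarith) (by linarith) f'' hint]
  have hn3 : f ((a+3*b)/4) = f a + f' a * ((a+3*b)/4 - a)
      + ∫ t in a..b, max ((a+3*b)/4 - t) 0 * f'' t := by
    rw [hT _ hm3, node_swap a _ b (by linarith) (by linarith) f'' hint]
  have hnb : f b = f a + f' a * (b - a)
      + ∫ t in a..b, max (b - t) 0 * f'' t := by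
    rw [hT _ hmb, node_swap a b b hab' le_rfl f'' hint]
  have hfc : ContinuousOn f (Set.Icc a b) := fun x hx =>
    (hderiv x hx).continuousAt.continuousWithinAt
  have hfint : IntervalIntegrable f volume a b :=
    ContinuousOn.intervalIntegrable (by rwa [Set.uIcc_of_le hab'])
  have hlinc : Continuous (fun x : ℝ => f a + f' a * (x - a)) := by fun_prop
  have hlinint : IntervalIntegrable (fun x => f a + f' a * (x - a)) volume a b :=
    hlinc.intervalIntegrable a b
  have E1 : ∫ x in a..b, (∫ t in a..x, (x - t) * f'' t)
      = (∫ t in a..b, f t) - ∫ x in a..b, (f a + f' a * (x - a)) := by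
    rw [← integral_sub hfint hlinint]
    refine integral_congr fun x hx => ?_
    rw [Set.uIcc_of_le hab'] at hx
    have h := hT x hx
    linarith
  have E2 : ∫ x in a..b, (∫ t in a..x, (x - t) * f'' t)
      = ∫ t in a..b, ((b - t)^2/2) * f'' t :=
    swap_two a b hab' f'' (hint.mono_set Set.Ioc_subset_Icc_self)
  have EL : ∫ x in a..b, (f a + f' a * (x - a)) = f a * (b - a) + f' a * ((b - a)^2/2) := by
    have hsc : Continuous (fun x : ℝ => x - a) := by fun_prop
    rw [integral_add intervalIntegrable_const ((hsc.intervalIntegrable a b).const_mul (f' a)),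
      intervalIntegral.integral_const, intervalIntegral.integral_const_mul,
      integral_sub intervalIntegrable_id intervalIntegrable_const,
      integral_id, intervalIntegral.integral_const, smul_eq_mul, smul_eq_mul]
    ring
  have prodInt : ∀ (φ g : ℝ → ℝ), Continuous φ → MeasureTheory.IntegrableOn g (Set.Icc a b) →
      IntervalIntegrable (fun t => φ t * g t) volume a b := by
    intro φ g hφ hg
    rw [intervalIntegrable_iff_integrableOn_Icc_of_le hab']
    exact MeasureTheory.IntegrableOn.continuousOn_mul hφ.continuousOn hg isCompact_Icc
  have i0 := prodInt _ f'' (show Continuous fun t : ℝ => (b - t)^2/2 by fun_prop) hint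
  have i1 := prodInt _ f'' (show Continuous fun t : ℝ => max ((3*a+b)/4 - t) 0 by fun_prop) hint
  have i2 := prodInt _ f'' (show Continuous fun t : ℝ => max ((a+b)/2 - t) 0 by fun_prop) hint
  have i3 := prodInt _ f'' (show Continuous fun t : ℝ => max ((a+3*b)/4 - t) 0 by fun_prop) hint
  have i4 := prodInt _ f'' (show Continuous fun t : ℝ => max (b - t) 0 by fun_prop) hint
  have eqlin : ∫ t in a..b, booleK a b t * f'' t
      = (∫ t in a..b, ((b - t)^2/2) * f'' t)
        - (b - a)/90 * (32 * (∫ t in a..b, max ((3*a+b)/4 - t) 0 * f'' t)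
          + 12 * (∫ t in a..b, max ((a+b)/2 - t) 0 * f'' t)
          + 32 * (∫ t in a..b, max ((a+3*b)/4 - t) 0 * f'' t)
          + 7 * (∫ t in a..b, max (b - t) 0 * f'' t)) := by
    have hfe : (fun t => booleK a b t * f'' t) = fun t =>
        ((b - t)^2/2) * f'' t - (b - a)/90 * (32 * (max ((3*a+b)/4 - t) 0 * f'' t)
          + 12 * (max ((a+b)/2 - t) 0 * f'' t) + 32 * (max ((a+3*b)/4 - t) 0 * f'' t)
          + 7 * (max (b - t) 0 * f'' t)) := by
      funext t; unfold booleK; ring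
    rw [hfe, integral_sub i0 (IntervalIntegrable.const_mul
        ((((i1.const_mul 32).add (i2.const_mul 12)).add (i3.const_mul 32)).add (i4.const_mul 7)) _),
      intervalIntegral.integral_const_mul,
      integral_add (((i1.const_mul 32).add (i2.const_mul 12)).add (i3.const_mul 32)) (i4.const_mul 7),
      integral_add ((i1.const_mul 32).add (i2.const_mul 12)) (i3.const_mul 32),
      integral_add (i1.const_mul 32) (i2.const_mul 12),
      intervalIntegral.integral_const_mul, intervalIntegral.integral_const_mul, intervalIntegral.integral_const_mul, intervalIntegral.integral_const_mul]
  have hrep : (∫ t in a..b, f t) - (b - a)/90 * (7*f a + 32*f ((3*a+b)/4) + 12*f ((a+b)/2)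
      + 32*f ((a+3*b)/4) + 7*f b) = ∫ t in a..b, booleK a b t * f'' t := by
    linear_combination (-1 : ℝ) * E1 + E2 - eqlin - (b-a)/90*32 * hn1 - (b-a)/90*12 * hn2
      - (b-a)/90*32 * hn3 - (b-a)/90*7 * hnb + EL
  have hK0 := booleK_integral a b hab'
  have hKb := booleK_bound a b hab
  have hKint : IntervalIntegrable (booleK a b) volume a b :=
    (booleK_cont a b).intervalIntegrable a b
  have hf''i : IntervalIntegrable f'' volume a b := by
    rw [intervalIntegrable_iff_integrableOn_Icc_of_le hab']; exact hint
  have iK := prodInt (booleK a b) f'' (booleK_cont a b) hint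
  have hgM : MeasureTheory.IntegrableOn (fun t => f'' t - M) (Set.Icc a b) :=
    hint.sub (MeasureTheory.integrableOn_const measure_Icc_lt_top.ne)
  have iKM := prodInt (booleK a b) (fun t => f'' t - M) (booleK_cont a b) hgM
  have hMfi : IntervalIntegrable (fun t => M - f'' t) volume a b :=
    intervalIntegrable_const.sub hf''i
  have hJ : ∫ t in a..b, booleK a b t * f'' t
      = ∫ t in a..b, booleK a b t * (f'' t - M) := by
    have hfe : (fun t => booleK a b t * (f'' t - M))
        = fun t => booleK a b t * f'' t - M * booleK a b t := by funext t; ring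
    rw [hfe, integral_sub iK (hKint.const_mul M), intervalIntegral.integral_const_mul, hK0, mul_zero, sub_zero]
  have hb1 : ∀ᵐ t ∂(MeasureTheory.volume.restrict (Set.Icc a b)), f'' t ≤ M := by
    filter_upwards [MeasureTheory.ae_restrict_of_ae hbound,
      MeasureTheory.ae_restrict_mem measurableSet_Icc] with t h1 h2 using h1 h2
  have hptwise : ∀ᵐ t ∂(MeasureTheory.volume.restrict (Set.Icc a b)),
      |booleK a b t * (f'' t - M)| ≤ 17/1440*(b-a)^2 * (M - f'' t) := by
    filter_upwards [hb1, MeasureTheory.ae_restrict_mem measurableSet_Icc] with t hM ht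
    have hKt := hKb t ht
    calc |booleK a b t * (f'' t - M)| = |booleK a b t| * (M - f'' t) := by
          rw [abs_mul, abs_of_nonpos (show f'' t - M ≤ 0 by linarith), neg_sub]
      _ ≤ 17/1440*(b-a)^2 * (M - f'' t) :=
          mul_le_mul_of_nonneg_right hKt (by linarith)
  have hub : ∫ t in a..b, booleK a b t * (f'' t - M)
      ≤ ∫ t in a..b, 17/1440*(b-a)^2 * (M - f'' t) := by
    refine integral_mono_ae_restrict hab' iKM (hMfi.const_mul _) ?_
    filter_upwards [hptwise] with t h
    exact le_trans (le_abs_self _) h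
  have hlb : ∫ t in a..b, (-(17/1440*(b-a)^2 * (M - f'' t)))
      ≤ ∫ t in a..b, booleK a b t * (f'' t - M) := by
    refine integral_mono_ae_restrict hab' ((hMfi.const_mul _).neg) iKM ?_
    filter_upwards [hptwise] with t h
    exact le_trans (neg_le_neg h) (neg_abs_le _)
  have hval : ∫ t in a..b, 17/1440*(b-a)^2 * (M - f'' t)
      = 17/1440*(b-a)^2 * (M * (b - a) - (f' b - f' a)) := by
    rw [intervalIntegral.integral_const_mul, integral_sub intervalIntegrable_const hf''i,
      intervalIntegral.integral_const, ← hac b hmb, smul_eq_mul]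
    ring
  have hneg : ∫ t in a..b, (-(17/1440*(b-a)^2 * (M - f'' t)))
      = -(17/1440*(b-a)^2 * (M * (b - a) - (f' b - f' a))) := by
    rw [intervalIntegral.integral_neg, hval]
  rw [hrep, hJ, abs_le]
  have hfinal : 17/1440*(b-a)^2 * (M * (b - a) - (f' b - f' a))
      = (17/1440 * (M - (f' b - f' a)/(b - a))) * (b - a)^3 := by
    have hne : b - a ≠ 0 := by linarith
    field_simp
  constructor
  · rw [← hfinal]
    calc -(17/1440*(b-a)^2 * (M * (b - a) - (f' b - f' a)))
        = ∫ t in a..b, (-(17/1440*(b-a)^2 * (M - f'' t))) := hneg.symm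
      _ ≤ _ := hlb
  · rw [← hfinal, ← hval]
    exact hub
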